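/- Let m, s, n be positive integers with n ≥ 3 and let r be a unit of Z_n with r^(ms) = ±1. In the graph CPMbar(m,s,n;r), for each 0 ≤ ℓ ≤ s-1 the map τ_ℓ given by ⟨i; (v_0,…,v_{s-1})⟩ ↦ ⟨i; (v_0,…,v_{ℓ-1}, -v_ℓ, v_{ℓ+1},…,v_{s-1})⟩ is an automorphism of CPMbar(m,s,n;r), and for all 0 ≤ ℓ, ℓ' ≤ s-1 one has τ_{ℓ'} ρ_ℓ τ_{ℓ'} = ρ_ℓ^{-1} if ℓ = ℓ' and τ_{ℓ'} ρ_ℓ τ_{ℓ'} = ρ_ℓ otherwise, where ρ_ℓ is the translation automorphism ⟨i; v⟩ ↦ ⟨i; v + e_ℓ⟩. -/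

import Mathlib

/-- The graph `CPMbar(m,s,n;r)`: vertex set `Z_{ms} × (Z_n)^s`, where `⟨i;v⟩` is adjacent to
`⟨i+1; v ± r^i · e_ℓ⟩` with `ℓ ≡ i (mod s)`. -/
def cpmBar (m s n : ℕ) (r : ZMod n) :
    SimpleGraph (ZMod (m * s) × (ZMod s → ZMod n)) :=
  SimpleGraph.fromRel (fun x y => ∃ ε : ZMod n, (ε = 1 ∨ ε = -1) ∧
    y.1 = x.1 + 1 ∧
    y.2 = x.2 + Pi.single (ZMod.castHom (dvd_mul_left s m) (ZMod s) x.1) (ε * r ^ x.1.val))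

/-- each reflection tau_l (negating the l-th component) is an automorphism of
CPMbar, and tau_l' ∘ rho_l ∘ tau_l' equals rho_l⁻¹ when l = l' and rho_l otherwise, where
rho_l is the translation <i;v> ↦ <i;v+e_l>. -/
theorem stmt2 (m s n : ℕ) (hm : 0 < m) (hs : 0 < s) (hn : 3 ≤ n)
    (r : ZMod n) (hu : IsUnit r) (hr : r ^ (m * s) = 1 ∨ r ^ (m * s) = -1) :
    let τ : ZMod s → ZMod (m * s) × (ZMod s → ZMod n) → ZMod (m * s) × (ZMod s → ZMod n) :=
      fun ℓ x => (x.1, fun j => if j = ℓ then -x.2 j else x.2 j)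
    let ρ : ZMod s → ZMod (m * s) × (ZMod s → ZMod n) → ZMod (m * s) × (ZMod s → ZMod n) :=
      fun ℓ x => (x.1, x.2 + Pi.single ℓ 1)
    (∀ ℓ : ZMod s, Function.Bijective (τ ℓ) ∧
      ∀ x y, (cpmBar m s n r).Adj x y ↔ (cpmBar m s n r).Adj (τ ℓ x) (τ ℓ y)) ∧
    (∀ ℓ ℓ' : ZMod s, τ ℓ' ∘ ρ ℓ ∘ τ ℓ' =
      if ℓ = ℓ' then (fun x => (x.1, x.2 - Pi.single ℓ 1)) else ρ ℓ) := by
  intro τ ρ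
  have hinv : ∀ ℓ x, τ ℓ (τ ℓ x) = x := by
    intro ℓ x
    simp only [τ]
    refine Prod.ext rfl ?_
    funext j
    by_cases h : j = ℓ <;> simp [h]
  have hrel : ∀ (ℓ : ZMod s) (x y : ZMod (m * s) × (ZMod s → ZMod n)),
      (∃ ε : ZMod n, (ε = 1 ∨ ε = -1) ∧ y.1 = x.1 + 1 ∧
        y.2 = x.2 + Pi.single (ZMod.castHom (dvd_mul_left s m) (ZMod s) x.1) (ε * r ^ x.1.val)) →
      (∃ ε : ZMod n, (ε = 1 ∨ ε = -1) ∧ (τ ℓ y).1 = (τ ℓ x).1 + 1 ∧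
        (τ ℓ y).2 = (τ ℓ x).2 +
          Pi.single (ZMod.castHom (dvd_mul_left s m) (ZMod s) (τ ℓ x).1) (ε * r ^ (τ ℓ x).1.val)) := by
    intro ℓ x y ⟨ε, hε, h1, h2⟩
    set c := ZMod.castHom (dvd_mul_left s m) (ZMod s) x.1 with hc
    refine ⟨if c = ℓ then -ε else ε, ?_, h1, ?_⟩
    · rcases hε with h | h <;> subst h <;> split <;> simp
    · funext j
      have h2j := congrFun h2 j
      simp only [τ, Pi.add_apply] at h2j ⊢
      rcases eq_or_ne c j with hcj | hcj
      · subst hcj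
        rw [Pi.single_eq_same] at h2j
        by_cases hj : c = ℓ
        · rw [if_pos hj, if_pos hj, if_pos hj, Pi.single_eq_same, h2j]; ring
        · rw [if_neg hj, if_neg hj, if_neg hj, Pi.single_eq_same, h2j]
      · have hcj' : j ≠ c := hcj.symm
        rw [Pi.single_eq_of_ne hcj', add_zero] at h2j
        rw [Pi.single_eq_of_ne hcj', add_zero]
        by_cases hj : j = ℓ
        · subst hj; simp [h2j]
        · simp [hj, h2j]
  constructor
  · intro ℓ
    have hbij : Function.Bijective (τ ℓ) :=
      Function.bijective_iff_has_inverse.2 ⟨τ ℓ, hinv ℓ, hinv ℓ⟩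
    refine ⟨hbij, fun x y => ⟨?_, ?_⟩⟩
    · intro h
      rw [cpmBar, SimpleGraph.fromRel_adj] at h ⊢
      refine ⟨fun he => h.1 (by rw [← hinv ℓ x, ← hinv ℓ y, he]), ?_⟩
      rcases h.2 with h | h
      · exact Or.inl (hrel ℓ x y h)
      · exact Or.inr (hrel ℓ y x h)
    · intro h
      rw [cpmBar, SimpleGraph.fromRel_adj] at h ⊢
      refine ⟨fun he => h.1 (by rw [he]), ?_⟩
      rcases h.2 with h | h
      · have := hrel ℓ _ _ h
        rw [hinv, hinv] at this
        exact Or.inl this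
      · have := hrel ℓ _ _ h
        rw [hinv, hinv] at this
        exact Or.inr this
  · intro ℓ ℓ'
    funext x
    simp only [Function.comp_apply, τ, ρ]
    by_cases h : ℓ = ℓ'
    · subst h
      rw [if_pos rfl]
      refine Prod.ext rfl ?_
      funext j
      simp only [Pi.add_apply, Pi.sub_apply]
      by_cases hj : j = ℓ <;> simp [hj, sub_eq_add_neg] <;> ring
    · rw [if_neg h]
      refine Prod.ext rfl ?_
      funext j
      simp only [Pi.add_apply]
      by_cases hj : j = ℓ'
      · have hne : j ≠ ℓ := by rw [hj]; exact fun hh => h hh.symm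
        simp [hj, Pi.single_eq_of_ne (show ℓ' ≠ ℓ from hj ▸ hne)]
      · simp [hj]
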